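/- Positions i and j of a permutation τ satisfy τ − {i} = τ − {j} (i.e., deleting the letter in position i and flattening gives the same permutation as deleting the letter in position j and flattening) if and only if i and j are positions in the same run of τ. -/

import Mathlib

open scoped Classical

/-- The set of all (finite) permutations, as patterns: a permutation of length `n`
together with its length. -/
abbrev PermPt := Σ n : ℕ, Equiv.Perm (Fin n)

/-- Pattern containment order: `σ` occurs in `τ` if there is a strictly monotone
choice of positions on which `τ` is order-isomorphic to `σ`. -/
def ple (σ τ : PermPt) : Prop :=
  ∃ f : Fin σ.1 → Fin τ.1, StrictMono f ∧
    ∀ a b : Fin σ.1, σ.2 a ≤ σ.2 b ↔ τ.2 (f a) ≤ τ.2 (f b)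

/-- Strict pattern containment. -/
def plt (σ τ : PermPt) : Prop := ple σ τ ∧ ¬ ple τ σ

/-- Direct sum of permutations. -/
def pds {m n : ℕ} (α : Equiv.Perm (Fin m)) (β : Equiv.Perm (Fin n)) :
    Equiv.Perm (Fin (m + n)) :=
  finSumFinEquiv.symm.trans ((Equiv.sumCongr α β).trans finSumFinEquiv)

/-- Skew sum of permutations. -/
def pss {m n : ℕ} (α : Equiv.Perm (Fin m)) (β : Equiv.Perm (Fin n)) :
    Equiv.Perm (Fin (m + n)) :=
  finSumFinEquiv.symm.trans
    (((Equiv.sumCongr α β).trans (Equiv.sumComm (Fin m) (Fin n))).trans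
      (finSumFinEquiv.trans (finCongr (Nat.add_comm n m))))

/-- Direct sum, as an operation on `PermPt`. -/
def pdsP (a b : PermPt) : PermPt := ⟨a.1 + b.1, pds a.2 b.2⟩

/-- Skew sum, as an operation on `PermPt`. -/
def pssP (a b : PermPt) : PermPt := ⟨a.1 + b.1, pss a.2 b.2⟩

/-- The empty permutation. -/
def pempty : PermPt := ⟨0, 1⟩

/-- The permutation `1` of length one. -/
def pone : PermPt := ⟨1, 1⟩

/-- A permutation is decomposable if it is the direct sum of two nonempty
permutations, i.e. some proper nonempty initial segment of positions is mapped
to the corresponding initial segment of values. -/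
def Decomp {n : ℕ} (σ : Equiv.Perm (Fin n)) : Prop :=
  ∃ m : ℕ, 0 < m ∧ m < n ∧ ∀ i : Fin n, (i : ℕ) < m → (σ i : ℕ) < m

/-- Disconnectedness of a set of permutations under pattern containment:
it splits into two nonempty parts with no comparabilities between them. -/
def Disconn (S : Set PermPt) : Prop :=
  ∃ A B : Set PermPt, A ∪ B = S ∧ A.Nonempty ∧ B.Nonempty ∧
    ∀ x ∈ A, ∀ y ∈ B, ¬ ple x y ∧ ¬ ple y x
/-- Deleting the letter in position `i` of `τ` and flattening. -/
def deleteAt {n : ℕ} (τ : Equiv.Perm (Fin (n + 1))) (i : Fin (n + 1)) :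
    Equiv.Perm (Fin n) :=
  Equiv.removeNone (((finSuccEquiv' i).symm.trans (τ : Fin (n+1) ≃ Fin (n+1))).trans
    (finSuccEquiv' (τ i)))

/-- The positions `lo ≤ k ≤ hi` form a run of `τ`: the values on these positions
are consecutive increasing `a, a+1, …` or consecutive decreasing `a, a-1, …`. -/
def IsRunOn {n : ℕ} (τ : Equiv.Perm (Fin n)) (lo hi : Fin n) : Prop :=
  lo ≤ hi ∧
  ((∀ k l : Fin n, lo ≤ k → k ≤ l → l ≤ hi →
      (τ l : ℕ) = (τ k : ℕ) + ((l : ℕ) - (k : ℕ))) ∨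
   (∀ k l : Fin n, lo ≤ k → k ≤ l → l ≤ hi →
      (τ k : ℕ) = (τ l : ℕ) + ((l : ℕ) - (k : ℕ))))

/-- Positions `i` and `j` lie in a common run of `τ`. -/
def SameRun {n : ℕ} (τ : Equiv.Perm (Fin n)) (i j : Fin n) : Prop :=
  ∃ lo hi : Fin n, IsRunOn τ lo hi ∧ lo ≤ i ∧ i ≤ hi ∧ lo ≤ j ∧ j ≤ hi

lemma deleteAt_val {n : ℕ} (τ : Equiv.Perm (Fin (n+1))) (i : Fin (n+1)) (k : Fin n) :
    ((deleteAt τ i k : Fin n) : ℕ) =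
      if (τ i : ℕ) < (τ (i.succAbove k) : ℕ) then (τ (i.succAbove k) : ℕ) - 1
      else (τ (i.succAbove k) : ℕ) := by
  set e := ((finSuccEquiv' i).symm.trans (τ : Fin (n+1) ≃ Fin (n+1))).trans
    (finSuccEquiv' (τ i)) with he
  have hsk : e (some k) = finSuccEquiv' (τ i) (τ (i.succAbove k)) := by
    simp [he, Equiv.trans_apply, finSuccEquiv'_symm_some]
  have hne : τ (i.succAbove k) ≠ τ i := fun h => (Fin.succAbove_ne i k) (τ.injective h)
  rcases hne.lt_or_gt with hlt | hgt
  · have hv : (τ (i.succAbove k) : ℕ) < n := lt_of_lt_of_le hlt (Fin.is_le _)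
    set m : Fin n := ⟨(τ (i.succAbove k) : ℕ), hv⟩ with hm
    have hcs : Fin.castSucc m = τ (i.succAbove k) := by
      apply Fin.ext; simp [hm]
    have h2 : e (some k) = some m := by
      rw [hsk, ← hcs]; exact finSuccEquiv'_below (by rw [hcs]; exact hlt)
    have h3 : some (deleteAt τ i k) = some m := by
      rw [show deleteAt τ i k = Equiv.removeNone e k from rfl]
      rw [Equiv.removeNone_some e ⟨m, h2⟩, h2]
    have h4 : deleteAt τ i k = m := Option.some_injective _ h3
    rw [h4, if_neg (by omega : ¬ ((τ i : ℕ) < (τ (i.succAbove k) : ℕ)))]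
  · have hv : 1 ≤ (τ (i.succAbove k) : ℕ) := by
      have : (τ i : ℕ) < (τ (i.succAbove k) : ℕ) := hgt
      omega
    have hv2 : (τ (i.succAbove k) : ℕ) - 1 < n := by
      have := (τ (i.succAbove k)).isLt; omega
    set m : Fin n := ⟨(τ (i.succAbove k) : ℕ) - 1, hv2⟩ with hm
    have hcs : Fin.succ m = τ (i.succAbove k) := by
      apply Fin.ext; simp [hm]; omega
    have hle : τ i ≤ Fin.castSucc m := by
      rw [Fin.le_def]
      have : (τ i : ℕ) < (τ (i.succAbove k) : ℕ) := hgt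
      simp [hm]; omega
    have h2 : e (some k) = some m := by
      rw [hsk, ← hcs]; exact finSuccEquiv'_above hle
    have h3 : some (deleteAt τ i k) = some m := by
      rw [show deleteAt τ i k = Equiv.removeNone e k from rfl]
      rw [Equiv.removeNone_some e ⟨m, h2⟩, h2]
    have h4 : deleteAt τ i k = m := Option.some_injective _ h3
    rw [h4, if_pos (show (τ i : ℕ) < (τ (i.succAbove k) : ℕ) from hgt)]

lemma steps_to_run (f : ℕ → ℕ) (i j : ℕ) (hij : i ≤ j)
    (inj : ∀ s t, s ≤ j → t ≤ j → f s = f t → s = t)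
    (step : ∀ t, i ≤ t → t < j → f (t+1) = f t + 1 ∨ f t = f (t+1) + 1) :
    (∀ k l, i ≤ k → k ≤ l → l ≤ j → f l = f k + (l - k)) ∨
    (∀ k l, i ≤ k → k ≤ l → l ≤ j → f k = f l + (l - k)) := by
  rcases eq_or_lt_of_le hij with rfl | hlt
  · left; intro k l hk hkl hl; have : k = l := le_antisymm hkl (hl.trans hk)
    subst this; omega
  have propagate : ∀ t, i ≤ t → t < j →
      (f (t+1) = f t + 1 ↔ f (i+1) = f i + 1) := by
    intro t
    induction t with
    | zero => intro h1 _; have : i = 0 := by omega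
              subst this; rfl
    | succ t ih =>
      intro h1 h2
      rcases Nat.lt_or_ge t i with h | h
      · have : i = t + 1 := by omega
        subst this; rfl
      · have ihh := ih h (by omega)
        have s1 := step t h (by omega)
        have s2 := step (t+1) (by omega) h2
        constructor
        · intro hh
          rcases s1 with a | a
          · exact ihh.mp a
          · have hft : f (t+1+1) = f t := by omega
            have := inj (t+1+1) t (by omega) (by omega) hft
            omega
        · intro hh
          have a : f (t+1) = f t + 1 := by
            rcases s1 with a | a
            · exact a
            · have := ihh.mpr hh; omega
          rcases s2 with b | b
          · exact b
          · have hft : f (t+1+1) = f t := by omega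
            have := inj (t+1+1) t (by omega) (by omega) hft
            omega
  by_cases hdir : f (i+1) = f i + 1
  · left
    have up : ∀ t, i ≤ t → t < j → f (t+1) = f t + 1 := by
      intro t h1 h2; exact (propagate t h1 h2).mpr hdir
    intro k l hk hkl hlj
    clear hdir step inj propagate
    induction l with
    | zero => have : k = 0 := by omega
              subst this; omega
    | succ l ih =>
      rcases Nat.lt_or_ge l k with h | h
      · have : k = l + 1 := by omega
        subst this; omega
      · have := ih h (by omega)
        have := up l (by omega) (by omega)
        omega
  · right
    have down : ∀ t, i ≤ t → t < j → f t = f (t+1) + 1 := by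
      intro t h1 h2
      rcases step t h1 h2 with a | a
      · exact absurd ((propagate t h1 h2).mp a) hdir
      · exact a
    intro k l hk hkl hlj
    clear hdir step inj propagate
    induction l with
    | zero => have : k = 0 := by omega
              subst this; omega
    | succ l ih =>
      rcases Nat.lt_or_ge l k with h | h
      · have : k = l + 1 := by omega
        subst this; omega
      · have := ih h (by omega)
        have := down l (by omega) (by omega)
        omega

lemma delete_eq_iff_sameRun_le (n : ℕ) (τ : Equiv.Perm (Fin (n + 1)))
    (i j : Fin (n + 1)) (hij : i ≤ j) :
    deleteAt τ i = deleteAt τ j ↔ SameRun τ i j := by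
  rcases eq_or_lt_of_le hij with rfl | hij
  · constructor
    · intro _
      refine ⟨i, i, ⟨le_refl i, Or.inl fun k l hk hkl hl => ?_⟩,
        le_refl i, le_refl i, le_refl i, le_refl i⟩
      have : k = l := le_antisymm hkl (hl.trans hk)
      subst this; omega
    · intro _; rfl
  have hijn : (i : ℕ) < (j : ℕ) := hij
  have hjn : (j : ℕ) ≤ n := Nat.lt_succ_iff.mp j.isLt
  set F : ℕ → ℕ := fun t => if h : t < n + 1 then (τ ⟨t, h⟩ : ℕ) else 0 with hF
  have hFval : ∀ p : Fin (n+1), F (p : ℕ) = (τ p : ℕ) := by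
    intro p; have := p.isLt; simp [hF, p.isLt]; omega
  have hFinj : ∀ s t : ℕ, s ≤ n → t ≤ n → F s = F t → s = t := by
    intro s t hs ht h
    simp only [hF] at h
    rw [dif_pos (by omega : s < n + 1), dif_pos (by omega : t < n + 1)] at h
    exact congrArg Fin.val (τ.injective (Fin.ext h))
  have hsa : ∀ (p : Fin (n+1)) (k : Fin n), ((p.succAbove k : Fin (n+1)) : ℕ)
      = if (k : ℕ) < (p : ℕ) then (k : ℕ) else (k : ℕ) + 1 := by
    intro p k
    rcases Nat.lt_or_ge (k : ℕ) (p : ℕ) with h | h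
    · rw [Fin.succAbove_of_castSucc_lt p k
        (by rw [Fin.lt_def, Fin.coe_castSucc]; exact h), if_pos h]; rfl
    · rw [Fin.succAbove_of_le_castSucc p k
        (by rw [Fin.le_def, Fin.coe_castSucc]; exact h), if_neg (by omega)]; rfl
  have heq : deleteAt τ i = deleteAt τ j ↔ ∀ k : Fin n,
      (if (τ i : ℕ) < (τ (i.succAbove k) : ℕ) then (τ (i.succAbove k) : ℕ) - 1
        else (τ (i.succAbove k) : ℕ)) =
      (if (τ j : ℕ) < (τ (j.succAbove k) : ℕ) then (τ (j.succAbove k) : ℕ) - 1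
        else (τ (j.succAbove k) : ℕ)) := by
    constructor
    · intro h k; rw [← deleteAt_val τ i k, ← deleteAt_val τ j k, h]
    · intro h; apply Equiv.ext; intro k
      apply Fin.ext
      rw [deleteAt_val τ i k, deleteAt_val τ j k]; exact h k
  rw [heq]
  constructor
  · -- forward: equal deletions imply run on [i, j]
    intro h
    have step : ∀ t, (i : ℕ) ≤ t → t < (j : ℕ) →
        F (t+1) = F t + 1 ∨ F t = F (t+1) + 1 := by
      intro t h1 h2
      have htn : t < n := lt_of_lt_of_le h2 hjn
      set k : Fin n := ⟨t, htn⟩ with hk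
      have hkv : (k : ℕ) = t := rfl
      have hk1 : ((i.succAbove k : Fin (n+1)) : ℕ) = t + 1 := by
        rw [hsa i k, hkv, if_neg (by omega)]
      have hk2 : ((j.succAbove k : Fin (n+1)) : ℕ) = t := by
        rw [hsa j k, hkv, if_pos h2]
      have e1 : ((τ (i.succAbove k)) : ℕ) = F (t+1) := by
        rw [← hFval (i.succAbove k), hk1]
      have e2 : ((τ (j.succAbove k)) : ℕ) = F t := by
        rw [← hFval (j.succAbove k), hk2]
      have hk' := h k
      rw [e1, e2, ← hFval i, ← hFval j] at hk'
      have ne1 : F (t+1) ≠ F (i : ℕ) := fun hc => by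
        have := hFinj (t+1) (i : ℕ) (by omega) (by omega) hc; omega
      have ne2 : F t ≠ F (j : ℕ) := fun hc => by
        have := hFinj t (j : ℕ) (by omega) (by omega) hc; omega
      have ne3 : F (t+1) ≠ F t := fun hc => by
        have := hFinj (t+1) t (by omega) (by omega) hc; omega
      split_ifs at hk' <;> omega
    have run := steps_to_run F (i : ℕ) (j : ℕ) (le_of_lt hijn)
      (fun s t hs ht hst => hFinj s t (hs.trans hjn) (ht.trans hjn) hst) step
    refine ⟨i, j, ⟨le_of_lt hij, ?_⟩, le_refl i, le_of_lt hij, le_of_lt hij, le_refl j⟩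
    rcases run with hup | hdown
    · left; intro k l hk hkl hl
      have := hup (k : ℕ) (l : ℕ) (Fin.le_def.mp hk) (Fin.le_def.mp hkl) (Fin.le_def.mp hl)
      rwa [hFval k, hFval l] at this
    · right; intro k l hk hkl hl
      have := hdown (k : ℕ) (l : ℕ) (Fin.le_def.mp hk) (Fin.le_def.mp hkl) (Fin.le_def.mp hl)
      rwa [hFval k, hFval l] at this
  · -- backward: same run implies equal deletions
    rintro ⟨lo, hi, ⟨hlohi, hrun⟩, hloi, hihi, hloj, hjhi⟩
    suffices hsuff :
        (∀ p : ℕ, p ≤ n → (p < (i : ℕ) ∨ (j : ℕ) < p) →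
          ((F p < F (i : ℕ) ∧ F p < F (j : ℕ)) ∨ (F (i : ℕ) < F p ∧ F (j : ℕ) < F p))) ∧
        (∀ t : ℕ, (i : ℕ) ≤ t → t < (j : ℕ) →
          (if F (i : ℕ) < F (t+1) then F (t+1) - 1 else F (t+1)) =
          (if F (j : ℕ) < F t then F t - 1 else F t)) by
      obtain ⟨hcmp, hmid⟩ := hsuff
      intro k
      have hk1 := hsa i k
      have hk2 := hsa j k
      rcases Nat.lt_or_ge (k : ℕ) (i : ℕ) with hki | hki
      · have hkj : (k : ℕ) < (j : ℕ) := by omega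
        rw [if_pos hki] at hk1
        rw [if_pos hkj] at hk2
        have e1 : ((τ (i.succAbove k)) : ℕ) = F (k : ℕ) := by
          rw [← hFval (i.succAbove k), hk1]
        have e2 : ((τ (j.succAbove k)) : ℕ) = F (k : ℕ) := by
          rw [← hFval (j.succAbove k), hk2]
        rw [e1, e2, ← hFval i, ← hFval j]
        have := hcmp (k : ℕ) (by have := k.isLt; omega) (Or.inl hki)
        split_ifs <;> omega
      · rcases Nat.lt_or_ge (k : ℕ) (j : ℕ) with hkj | hkj
        · -- middle case
          rw [if_neg (by omega)] at hk1
          rw [if_pos hkj] at hk2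
          have e1 : ((τ (i.succAbove k)) : ℕ) = F ((k : ℕ) + 1) := by
            rw [← hFval (i.succAbove k), hk1]
          have e2 : ((τ (j.succAbove k)) : ℕ) = F (k : ℕ) := by
            rw [← hFval (j.succAbove k), hk2]
          rw [e1, e2, ← hFval i, ← hFval j]
          exact hmid (k : ℕ) hki hkj
        · rw [if_neg (by omega)] at hk1
          rw [if_neg (by omega)] at hk2
          have e1 : ((τ (i.succAbove k)) : ℕ) = F ((k : ℕ) + 1) := by
            rw [← hFval (i.succAbove k), hk1]
          have e2 : ((τ (j.succAbove k)) : ℕ) = F ((k : ℕ) + 1) := by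
            rw [← hFval (j.succAbove k), hk2]
          rw [e1, e2, ← hFval i, ← hFval j]
          have := hcmp ((k : ℕ) + 1) (by have := k.isLt; omega) (Or.inr (by omega))
          split_ifs <;> omega
    rcases hrun with hup | hdown
    · -- increasing run
      have rup : ∀ s t : ℕ, (i : ℕ) ≤ s → s ≤ t → t ≤ (j : ℕ) →
          F t = F s + (t - s) := by
        intro s t h1 h2 h3
        have hs : s < n + 1 := by omega
        have ht : t < n + 1 := by omega
        have hx := hup ⟨s, hs⟩ ⟨t, ht⟩
          (le_trans hloi (by rw [Fin.le_def]; exact h1))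
          (by rw [Fin.le_def]; exact h2)
          (le_trans (by rw [Fin.le_def]; exact h3) hjhi)
        have e1 : F s = (τ ⟨s, hs⟩ : ℕ) := hFval ⟨s, hs⟩
        have e2 : F t = (τ ⟨t, ht⟩ : ℕ) := hFval ⟨t, ht⟩
        have hv1 : ((⟨s, hs⟩ : Fin (n+1)) : ℕ) = s := rfl
        have hv2 : ((⟨t, ht⟩ : Fin (n+1)) : ℕ) = t := rfl
        rw [hv1, hv2, ← e1, ← e2] at hx
        exact hx
      have hb : F (j : ℕ) = F (i : ℕ) + ((j : ℕ) - (i : ℕ)) :=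
        rup (i : ℕ) (j : ℕ) le_rfl (le_of_lt hijn) le_rfl
      constructor
      · intro p hp hside
        have hne1 : F p ≠ F (i : ℕ) := fun hc => by
          have := hFinj p (i : ℕ) hp (by omega) hc; omega
        have hne2 : F p ≠ F (j : ℕ) := fun hc => by
          have := hFinj p (j : ℕ) hp (by omega) hc; omega
        have hout : ¬ (F (i : ℕ) ≤ F p ∧ F p ≤ F (j : ℕ)) := by
          rintro ⟨h1, h2⟩
          have f1 := rup (i : ℕ) ((i : ℕ) + (F p - F (i : ℕ))) le_rfl (by omega) (by omega)
          have f2 : F ((i : ℕ) + (F p - F (i : ℕ))) = F p := by omega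
          have := hFinj ((i : ℕ) + (F p - F (i : ℕ))) p (by omega) hp f2
          omega
        omega
      · intro t h1 h2
        have f1 := rup (i : ℕ) (t+1) le_rfl (by omega) (by omega)
        have f2 := rup (i : ℕ) t le_rfl (by omega) (by omega)
        have hne : F t ≠ F (j : ℕ) := fun hc => by
          have := hFinj t (j : ℕ) (by omega) (by omega) hc; omega
        split_ifs <;> omega
    · -- decreasing run
      have rdown : ∀ s t : ℕ, (i : ℕ) ≤ s → s ≤ t → t ≤ (j : ℕ) →
          F s = F t + (t - s) := by
        intro s t h1 h2 h3
        have hs : s < n + 1 := by omega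
        have ht : t < n + 1 := by omega
        have hx := hdown ⟨s, hs⟩ ⟨t, ht⟩
          (le_trans hloi (by rw [Fin.le_def]; exact h1))
          (by rw [Fin.le_def]; exact h2)
          (le_trans (by rw [Fin.le_def]; exact h3) hjhi)
        have e1 : F s = (τ ⟨s, hs⟩ : ℕ) := hFval ⟨s, hs⟩
        have e2 : F t = (τ ⟨t, ht⟩ : ℕ) := hFval ⟨t, ht⟩
        have hv1 : ((⟨s, hs⟩ : Fin (n+1)) : ℕ) = s := rfl
        have hv2 : ((⟨t, ht⟩ : Fin (n+1)) : ℕ) = t := rfl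
        rw [hv1, hv2, ← e1, ← e2] at hx
        exact hx
      have ha : F (i : ℕ) = F (j : ℕ) + ((j : ℕ) - (i : ℕ)) :=
        rdown (i : ℕ) (j : ℕ) le_rfl (le_of_lt hijn) le_rfl
      constructor
      · intro p hp hside
        have hne1 : F p ≠ F (i : ℕ) := fun hc => by
          have := hFinj p (i : ℕ) hp (by omega) hc; omega
        have hne2 : F p ≠ F (j : ℕ) := fun hc => by
          have := hFinj p (j : ℕ) hp (by omega) hc; omega
        have hout : ¬ (F (j : ℕ) ≤ F p ∧ F p ≤ F (i : ℕ)) := by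
          rintro ⟨h1, h2⟩
          have f1 := rdown (i : ℕ) ((i : ℕ) + (F (i : ℕ) - F p)) le_rfl (by omega) (by omega)
          have f2 : F ((i : ℕ) + (F (i : ℕ) - F p)) = F p := by omega
          have := hFinj ((i : ℕ) + (F (i : ℕ) - F p)) p (by omega) hp f2
          omega
        omega
      · intro t h1 h2
        have f1 := rdown (i : ℕ) (t+1) le_rfl (by omega) (by omega)
        have f2 := rdown (i : ℕ) t le_rfl (by omega) (by omega)
        have hne : F t ≠ F (j : ℕ) := fun hc => by
          have := hFinj t (j : ℕ) (by omega) (by omega) hc; omega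
        split_ifs <;> omega


theorem delete_eq_iff_sameRun (n : ℕ) (τ : Equiv.Perm (Fin (n + 1)))
    (i j : Fin (n + 1)) :
    deleteAt τ i = deleteAt τ j ↔ SameRun τ i j := by
  rcases le_total i j with h | h
  · exact delete_eq_iff_sameRun_le n τ i j h
  · rw [show (deleteAt τ i = deleteAt τ j) ↔ (deleteAt τ j = deleteAt τ i) from eq_comm,
      delete_eq_iff_sameRun_le n τ j i h]
    exact ⟨fun ⟨lo, hi, hr, a, b, c, d⟩ => ⟨lo, hi, hr, c, d, a, b⟩,
      fun ⟨lo, hi, hr, a, b, c, d⟩ => ⟨lo, hi, hr, c, d, a, b⟩⟩
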